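/- For a ∈ (0,1), let γ(a) = 0.1a + 0.9, q'(a) = (a/4)/(1 + a/2), and K₂(a,c,q) = (1+c)^q·(√(1+c²-ac))^{1-q}. Then K₂(a, a·γ(a), q'(a)) > 1 for all a ∈ (0,1). -/

import Mathlib

/-- K₂(a, a·γ(a), q'(a)) > 1 for all a ∈ (0,1), where γ(a) = 0.1a + 0.9,
q'(a) = (a/4)/(1+a/2), and K₂(a,c,q) = (1+c)^q·(√(1+c²-ac))^{1-q}. -/
theorem K2_gt_one (a : ℝ) (ha0 : 0 < a) (ha1 : a < 1)
    (γ q' c : ℝ) (hγ : γ = 0.1 * a + 0.9) (hq' : q' = (a / 4) / (1 + a / 2))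
    (hc : c = a * γ) :
    (1 + c) ^ q' * (Real.sqrt (1 + c ^ 2 - a * c)) ^ (1 - q') > 1 := by
  have hc0 : 0 < c := by rw [hc, hγ]; nlinarith
  have hc1 : c < 1 := by rw [hc, hγ]; nlinarith
  have hca : c < a := by rw [hc, hγ]; nlinarith
  have hA : (0:ℝ) < 1 + c := by linarith
  have hx : (0:ℝ) < 1 + c ^ 2 - a * c := by nlinarith
  have hq0 : 0 < q' := by rw [hq']; positivity
  have hq1 : q' < 1 := by
    rw [hq', div_lt_one (by linarith)]
    linarith
  -- log lower bounds: log x ≥ (x-1)/x for x > 0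
  have hlog1 : c / (1 + c) ≤ Real.log (1 + c) := by
    have h := Real.log_le_sub_one_of_pos (x := (1 + c)⁻¹) (by positivity)
    rw [Real.log_inv] at h
    rw [div_le_iff₀ hA]
    nlinarith [h, inv_mul_cancel₀ (ne_of_gt hA)]
  have hlog2 : (c ^ 2 - a * c) / (1 + c ^ 2 - a * c) ≤ Real.log (1 + c ^ 2 - a * c) := by
    have h := Real.log_le_sub_one_of_pos (x := (1 + c ^ 2 - a * c)⁻¹) (by positivity)
    rw [Real.log_inv] at h
    rw [div_le_iff₀ hx]
    nlinarith [h, inv_mul_cancel₀ (ne_of_gt hx)]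
  -- the key rational inequality
  have hq'eq : q' = a / (4 + 2 * a) := by
    rw [hq']
    rw [div_eq_div_iff (by linarith) (by linarith)]
    ring
  have haux : 0 < 2 * a * c * (1 + c ^ 2 - a * c) + (4 + a) * (c ^ 2 - a * c) * (1 + c) := by
    rw [hc, hγ]
    nlinarith [sq_nonneg a, sq_nonneg (1 - a), mul_pos ha0 ha0,
      mul_pos (mul_pos ha0 ha0) ha0, sq_nonneg (a * (1 - a)), sq_nonneg (a * a * (1 - a))]
  have hnum : 0 < 2 * q' * c * (1 + c ^ 2 - a * c) + (1 - q') * (c ^ 2 - a * c) * (1 + c) := by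
    have hq'' : q' * (4 + 2 * a) = a := by
      rw [hq'eq]
      field_simp
    have h5 : (2 * q' * c * (1 + c ^ 2 - a * c) + (1 - q') * (c ^ 2 - a * c) * (1 + c)) *
        (4 + 2 * a) =
        2 * a * c * (1 + c ^ 2 - a * c) + (4 + a) * (c ^ 2 - a * c) * (1 + c) := by
      linear_combination (2 * c * (1 + c ^ 2 - a * c) - (c ^ 2 - a * c) * (1 + c)) * hq''
    nlinarith [haux, h5]
  have key : 0 < q' * (c / (1 + c)) + (1 - q') / 2 * ((c ^ 2 - a * c) / (1 + c ^ 2 - a * c)) := by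
    have heq : q' * (c / (1 + c)) + (1 - q') / 2 * ((c ^ 2 - a * c) / (1 + c ^ 2 - a * c)) =
        (2 * q' * c * (1 + c ^ 2 - a * c) + (1 - q') * (c ^ 2 - a * c) * (1 + c)) /
          (2 * (1 + c) * (1 + c ^ 2 - a * c)) := by
      generalize hD : 1 + c ^ 2 - a * c = D at hx ⊢
      field_simp
    rw [heq]
    exact div_pos hnum (by positivity)
  have hL : 0 < q' * Real.log (1 + c) + (1 - q') * Real.log (Real.sqrt (1 + c ^ 2 - a * c)) := by
    rw [Real.log_sqrt hx.le]
    have h1 : q' * (c / (1 + c)) ≤ q' * Real.log (1 + c) :=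
      mul_le_mul_of_nonneg_left hlog1 hq0.le
    have h2 : (1 - q') / 2 * ((c ^ 2 - a * c) / (1 + c ^ 2 - a * c)) ≤
        (1 - q') / 2 * Real.log (1 + c ^ 2 - a * c) :=
      mul_le_mul_of_nonneg_left hlog2 (by linarith)
    calc (0:ℝ) < q' * (c / (1 + c)) + (1 - q') / 2 * ((c ^ 2 - a * c) / (1 + c ^ 2 - a * c)) := key
      _ ≤ q' * Real.log (1 + c) + (1 - q') / 2 * Real.log (1 + c ^ 2 - a * c) := by linarith
      _ = q' * Real.log (1 + c) + (1 - q') * (Real.log (1 + c ^ 2 - a * c) / 2) := by ring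
  have hB : 0 < Real.sqrt (1 + c ^ 2 - a * c) := Real.sqrt_pos.mpr hx
  rw [Real.rpow_def_of_pos hA, Real.rpow_def_of_pos hB, ← Real.exp_add]
  calc (1:ℝ) = Real.exp 0 := Real.exp_zero.symm
    _ < Real.exp (Real.log (1 + c) * q' + Real.log (Real.sqrt (1 + c ^ 2 - a * c)) * (1 - q')) := by
        apply Real.exp_lt_exp.mpr
        linarith [hL]
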